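/- Let S be a polynomial ring over a field, and let a_1, ..., a_{g-2}, x be linearly independent linear forms. Then (a_1 x, ..., a_{g-2} x, x^2) = (x) ∩ (a_1, ..., a_{g-2}, x^2). -/

import Mathlib

open MvPolynomial

lemma degree_one_eq_single {σ : Type*} {d : σ →₀ ℕ} (h : d.degree = 1) :
    ∃ j, d = Finsupp.single j 1 := by
  classical
  have hne : d ≠ 0 := by
    intro h0; rw [h0] at h; simp at h
  obtain ⟨j, hj⟩ := Finsupp.ne_iff.mp hne
  simp only [Finsupp.coe_zero, Pi.zero_apply] at hj
  refine ⟨j, ?_⟩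
  have hj1 : 1 ≤ d j := Nat.one_le_iff_ne_zero.mpr hj
  have hle := Finsupp.le_degree j d
  ext i
  rcases eq_or_ne i j with rfl | hij
  · simp only [Finsupp.single_eq_same]; omega
  · simp only [Finsupp.single_eq_of_ne' (Ne.symm hij)]
    by_contra hi
    have h1 : 1 ≤ d i := Nat.one_le_iff_ne_zero.mpr hi
    have : d i + d j ≤ d.degree := by
      unfold Finsupp.degree
      have hiS : i ∈ d.support := Finsupp.mem_support_iff.mpr hi
      have hjS : j ∈ d.support := Finsupp.mem_support_iff.mpr hj
      calc d i + d j = ∑ s ∈ ({i, j} : Finset σ), d s := by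
            rw [Finset.sum_pair hij]
        _ ≤ ∑ s ∈ d.support, d s := Finset.sum_le_sum_of_subset (by
            intro s hs
            simp only [Finset.mem_insert, Finset.mem_singleton] at hs
            rcases hs with rfl | rfl <;> assumption)
    omega

lemma homog_one_rep {k : Type*} [CommRing k] {n : ℕ} {p : MvPolynomial (Fin n) k}
    (hp : p.IsHomogeneous 1) :
    p = ∑ j, C (coeff (Finsupp.single j 1) p) * X j := by
  ext d
  rw [coeff_sum]
  simp only [coeff_C_mul, coeff_X']
  rcases eq_or_ne d.degree 1 with hd | hd
  · obtain ⟨j0, rfl⟩ := degree_one_eq_single hd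
    rw [Finset.sum_eq_single j0]
    · simp
    · intro b _ hb
      rw [if_neg, mul_zero]
      intro hc
      exact hb (Finsupp.single_left_injective one_ne_zero hc)
    · intro h; simp at h
  · rw [hp.coeff_eq_zero hd]
    apply (Finset.sum_eq_zero ?_).symm
    intro j _
    rw [if_neg, mul_zero]
    intro hc
    apply hd
    rw [← hc]
    exact Finsupp.degree_single j 1

open MvPolynomial

noncomputable def subM {k : Type*} [CommRing k] {n : ℕ} (M : Matrix (Fin n) (Fin n) k) :
    MvPolynomial (Fin n) k →ₐ[k] MvPolynomial (Fin n) k :=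
  aeval (fun j => ∑ i, C (M j i) * X i)

lemma subM_X {k : Type*} [CommRing k] {n : ℕ} (M : Matrix (Fin n) (Fin n) k) (j : Fin n) :
    subM M (X j) = ∑ i, C (M j i) * X i := aeval_X _ _

lemma subM_comp {k : Type*} [CommRing k] {n : ℕ} (M N : Matrix (Fin n) (Fin n) k) :
    (subM M).comp (subM N) = subM (N * M) := by
  apply algHom_ext
  intro j
  simp only [AlgHom.comp_apply, subM_X, map_sum, map_mul, subM, aeval_C, aeval_X]
  simp_rw [algebraMap_eq, Finset.mul_sum, Matrix.mul_apply, map_sum, Finset.sum_mul,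
    ← mul_assoc, ← C_mul]
  rw [Finset.sum_comm]

lemma subM_one {k : Type*} [CommRing k] {n : ℕ} :
    subM (1 : Matrix (Fin n) (Fin n) k) = AlgHom.id k _ := by
  apply algHom_ext
  intro j
  simp [subM_X, Matrix.one_apply, ite_smul, Finset.sum_ite_eq]

noncomputable def subEquiv {k : Type*} [Field k] {n : ℕ} (M : Matrix (Fin n) (Fin n) k)
    (h : IsUnit M.det) : MvPolynomial (Fin n) k ≃ₐ[k] MvPolynomial (Fin n) k :=
  AlgEquiv.ofAlgHom (subM M) (subM M⁻¹)
    (by rw [subM_comp, Matrix.nonsing_inv_mul M h, subM_one])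
    (by rw [subM_comp, Matrix.mul_nonsing_inv M h, subM_one])

lemma subEquiv_apply {k : Type*} [Field k] {n : ℕ} (M : Matrix (Fin n) (Fin n) k)
    (h : IsUnit M.det) (p) : subEquiv M h p = subM M p := rfl

open MvPolynomial

lemma var_case {k : Type*} [CommRing k] {n : ℕ} {s : Set (Fin n)} {j0 : Fin n} (hj : j0 ∉ s)
    {q : MvPolynomial (Fin n) k} (h : X j0 * q ∈ Ideal.span (X '' s : Set (MvPolynomial (Fin n) k))) :
    q ∈ Ideal.span (X '' s : Set (MvPolynomial (Fin n) k)) := by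
  rw [mem_ideal_span_X_image] at h ⊢
  intro m hm
  have hmem : Finsupp.single j0 1 + m ∈ (X j0 * q).support := by
    rw [support_X_mul]
    exact Finset.mem_map.mpr ⟨m, hm, rfl⟩
  obtain ⟨i, his, hi⟩ := h _ hmem
  refine ⟨i, his, ?_⟩
  have hij : i ≠ j0 := fun hh => hj (hh ▸ his)
  simpa [Finsupp.single_apply, Ne.symm hij] using hi

lemma key_regular {k : Type*} [Field k] {n m : ℕ}
    (x : MvPolynomial (Fin n) k) (a : Fin m → MvPolynomial (Fin n) k)
    (hx : x.IsHomogeneous 1) (ha : ∀ i, (a i).IsHomogeneous 1)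
    (hind : LinearIndependent k (Fin.cons x a : Fin (m + 1) → MvPolynomial (Fin n) k))
    {p : MvPolynomial (Fin n) k} (h : x * p ∈ Ideal.span (Set.range a)) :
    p ∈ Ideal.span (Set.range a) := by
  classical
  set b : Fin (m+1) → MvPolynomial (Fin n) k := Fin.cons x a with hb
  have hb_homog : ∀ i, (b i).IsHomogeneous 1 := Fin.cases hx ha
  let φ : MvPolynomial (Fin n) k →ₗ[k] (Fin n → k) :=
    { toFun := fun q j => coeff (Finsupp.single j 1) q
      map_add' := by intros; ext; simp [coeff_add]
      map_smul' := by intros; ext; simp [coeff_smul] }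
  have hdisj : Disjoint (Submodule.span k (Set.range b)) (LinearMap.ker φ) := by
    rw [Submodule.disjoint_def]
    intro q hq hker
    have hspan : Submodule.span k (Set.range b) ≤ homogeneousSubmodule (Fin n) k 1 :=
      Submodule.span_le.mpr (by
        rintro _ ⟨i, rfl⟩
        exact (mem_homogeneousSubmodule _ _).mpr (hb_homog i))
    have hqh : q.IsHomogeneous 1 := (mem_homogeneousSubmodule _ _).mp (hspan hq)
    have hc : ∀ j, coeff (Finsupp.single j 1) q = 0 := fun j =>
      congr_fun (LinearMap.mem_ker.mp hker) j
    rw [homog_one_rep hqh]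
    simp [hc]
  have hv : LinearIndependent k (φ ∘ b) := hind.map hdisj
  set v : Fin (m+1) → (Fin n → k) := φ ∘ b with hvdef
  have hvinj : Function.Injective v := hv.injective
  have hv' : LinearIndepOn k id (Set.range v) := (linearIndepOn_id_range_iff hvinj).mpr hv
  set t := hv'.extend (Set.subset_univ _) with ht
  let B0 : Module.Basis t k (Fin n → k) := Module.Basis.extend hv'
  haveI : Fintype t := FiniteDimensional.fintypeBasisIndex B0
  have hcard : Fintype.card t = n := by
    have h1 := Module.finrank_eq_card_basis B0
    rw [Module.finrank_fin_fun] at h1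
    exact h1.symm
  let e : t ≃ Fin n := Fintype.equivFinOfCardEq hcard
  let B := B0.reindex e
  let M : Matrix (Fin n) (Fin n) k := Matrix.of fun jj i => B jj i
  have hM : IsUnit M.det := by
    have hMt : M = ((Pi.basisFun k (Fin n)).toMatrix B).transpose := by
      ext jj i
      rw [Matrix.transpose_apply, Module.Basis.toMatrix_apply, Pi.basisFun_repr]
      rfl
    letI := (Pi.basisFun k (Fin n)).invertibleToMatrix B
    rw [hMt, Matrix.det_transpose]
    exact Matrix.isUnit_det_of_invertible _
  set E := subEquiv M hM with hE
  have hmemt : ∀ i, v i ∈ t := fun i => hv'.subset_extend _ ⟨i, rfl⟩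
  let jmap : Fin (m+1) → Fin n := fun i => e ⟨v i, hmemt i⟩
  have hEX : ∀ i, E (X (jmap i)) = b i := by
    intro i
    have h1 : E (X (jmap i)) = ∑ s, C (M (jmap i) s) * X s := subM_X _ _
    have h2 : ∀ s, M (jmap i) s = coeff (Finsupp.single s 1) (b i) := by
      intro s
      show B (jmap i) s = _
      rw [Module.Basis.reindex_apply, Equiv.symm_apply_apply, Module.Basis.extend_apply_self]
      rfl
    rw [h1]
    simp_rw [h2]
    exact (homog_one_rep (hb_homog i)).symm
  have hjinj : Function.Injective jmap := by
    intro i1 i2 hh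
    exact hvinj (congrArg Subtype.val (e.injective hh))
  set s : Set (Fin n) := Set.range (fun i : Fin m => jmap i.succ) with hs
  have hj0 : jmap 0 ∉ s := by
    rintro ⟨i, hi⟩
    exact (Fin.succ_ne_zero i) (hjinj hi)
  set I : Ideal (MvPolynomial (Fin n) k) := Ideal.span (X '' s) with hI
  set Ering : MvPolynomial (Fin n) k ≃+* MvPolynomial (Fin n) k := E.toRingEquiv with hEring
  have hmap : Ideal.span (Set.range a) = Ideal.map (Ering : MvPolynomial (Fin n) k →+* MvPolynomial (Fin n) k) I := by
    rw [hI, Ideal.map_span]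
    congr 1
    have h1 : (X '' s : Set (MvPolynomial (Fin n) k)) = Set.range (fun i : Fin m => X (jmap i.succ)) := by
      rw [hs, ← Set.range_comp]; rfl
    rw [h1, ← Set.range_comp]
    apply congrArg Set.range
    funext i
    refine Eq.symm ?_
    show E (X (jmap i.succ)) = a i
    rw [hEX i.succ, hb, Fin.cons_succ]
  rw [hmap, Ideal.map_comap_of_equiv, Ideal.mem_comap] at h ⊢
  have hxE : Ering.symm x = X (jmap 0) := by
    have := hEX 0
    rw [hb, Fin.cons_zero] at this
    rw [← this]
    exact E.symm_apply_apply _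
  rw [map_mul, hxE] at h
  exact var_case hj0 h

/-- if `a_1, …, a_m, x` are linearly independent linear forms in a polynomial
ring over a field (here `m = g - 2`), then `(a_1 x, …, a_m x, x^2) = (x) ∩ (a_1, …, a_m, x^2)`. -/
theorem stmt_5 {k : Type*} [Field k] {n m : ℕ}
    (x : MvPolynomial (Fin n) k) (a : Fin m → MvPolynomial (Fin n) k)
    (hx : x.IsHomogeneous 1) (ha : ∀ i, (a i).IsHomogeneous 1)
    (hind : LinearIndependent k (Fin.cons x a : Fin (m + 1) → MvPolynomial (Fin n) k)) :
    Ideal.span ((Set.range fun i => a i * x) ∪ {x ^ 2})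
      = Ideal.span {x} ⊓ Ideal.span (Set.range a ∪ {x ^ 2}) := by
  classical
  apply le_antisymm
  · rw [Ideal.span_le]
    rintro f (⟨i, rfl⟩ | rfl)
    · simp only [SetLike.mem_coe]
      refine Submodule.mem_inf.mpr ⟨?_, ?_⟩
      · exact Ideal.mem_span_singleton.mpr (dvd_mul_left x (a i))
      · exact Ideal.mul_mem_right _ _ (Ideal.subset_span (Or.inl ⟨i, rfl⟩))
    · simp only [SetLike.mem_coe]
      refine Submodule.mem_inf.mpr ⟨?_, Ideal.subset_span (Or.inr rfl)⟩
      exact Ideal.mem_span_singleton.mpr (dvd_pow_self x two_ne_zero)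
  · intro f hf
    obtain ⟨hf1, hf2⟩ := Submodule.mem_inf.mp hf
    obtain ⟨g, hg⟩ := Ideal.mem_span_singleton'.mp hf1
    rw [Ideal.span_union] at hf2
    obtain ⟨q, hq, r, hr, hqr⟩ := Submodule.mem_sup.mp hf2
    obtain ⟨d, hd⟩ := Ideal.mem_span_singleton'.mp hr
    have hkey : g - d * x ∈ Ideal.span (Set.range a) := by
      apply key_regular x a hx ha hind
      have h1 : x * (g - d * x) = f - r := by rw [← hg, ← hd]; ring
      have h2 : x * (g - d * x) = q := by rw [h1, ← hqr]; ring
      rw [h2]; exact hq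
    have hfeq : f = x * (g - d * x) + d * x ^ 2 := by rw [← hg]; ring
    rw [hfeq]
    apply Ideal.add_mem
    · have h2 : x * (g - d * x) ∈ Ideal.span (Set.range fun i => a i * x) := by
        refine Submodule.span_induction
          (p := fun y _ => x * y ∈ Ideal.span (Set.range fun i => a i * x))
          ?_ ?_ ?_ ?_ hkey
        · rintro y ⟨i, rfl⟩
          exact Ideal.subset_span ⟨i, mul_comm x (a i) ▸ rfl⟩
        · simp only [mul_zero]
          exact Ideal.zero_mem (Ideal.span (Set.range fun i => a i * x))
        · intro y z hy hz hy' hz'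
          rw [mul_add]
          exact Ideal.add_mem _ hy' hz'
        · intro c y hy hy'
          rw [smul_eq_mul, mul_left_comm]
          exact Ideal.mul_mem_left _ _ hy'
      exact Ideal.span_mono Set.subset_union_left h2
    · exact Ideal.mul_mem_left _ _ (Ideal.subset_span (Set.mem_union_right _ rfl))
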